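/- Under cluster randomization (uniformly random treated subset of size m, 0 < m < J, J ≥ 2), monotonicity, the exclusion restriction, and n_CO,j ≥ 1 for every cluster j, the two-stage least squares estimator identifies a weighted average of cluster-level CACEs: E[ Σ_j (1−Z_j)n_j · Σ_j Z_j Y_j − Σ_j Z_j n_j · Σ_j (1−Z_j)Y_j ] / E[ Σ_j (1−Z_j)n_j · Σ_j Z_j D_j − Σ_j Z_j n_j · Σ_j (1−Z_j)D_j ] = Σ_{j=1}^J w_TSLS,j · τ_j, where n = Σ_j n_j and w_TSLS,j = n_CO,j(n − n_j) / (Σ_{l=1}^J n_CO,l(n − n_l)); moreover the denominator expectation equals (m(J−m)/(J(J−1)))·Σ_j n_CO,j (n − n_j) > 0. -/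

import Mathlib

open Finset

/-- Average of `f` over all size-`m` treated subsets of the `J` clusters
(uniform cluster randomization). -/
noncomputable def clExpect (J m : ℕ) (f : Finset (Fin J) → ℝ) : ℝ :=
  (∑ s ∈ (univ : Finset (Finset (Fin J))).filter (fun s => s.card = m), f s) / (J.choose m)


lemma countJS {J : ℕ} (m : ℕ) (hm : 1 ≤ m) {j k : Fin J} (hjk : j ≠ k) :
    ((((univ : Finset (Finset (Fin J))).filter (fun s => s.card = m)).filter
      (fun s => j ∈ s ∧ k ∉ s)).card) = (J - 2).choose (m - 1) := by
  have hcard : ((((univ : Finset (Finset (Fin J))).filter (fun s => s.card = m)).filter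
      (fun s => j ∈ s ∧ k ∉ s)).card)
      = (((univ.erase k).erase j).powersetCard (m - 1)).card := by
    apply Finset.card_nbij' (fun s => s.erase j) (fun t => insert j t)
    · intro s hs
      simp only [mem_coe, mem_filter, mem_univ, true_and] at hs
      obtain ⟨hsm, hjs, hks⟩ : s.card = m ∧ j ∈ s ∧ k ∉ s := ⟨hs.1, hs.2.1, hs.2.2⟩
      rw [mem_coe, mem_powersetCard]
      refine ⟨fun x hx => ?_, ?_⟩
      · rw [mem_erase] at hx ⊢
        exact ⟨hx.1, mem_erase.mpr ⟨fun h => hks (h ▸ hx.2), mem_univ x⟩⟩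
      · rw [card_erase_of_mem hjs, hsm]
    · intro t ht
      rw [mem_coe, mem_powersetCard] at ht
      obtain ⟨hsub, hcard⟩ := ht
      have hjt : j ∉ t := fun h => (mem_erase.mp (hsub h)).1 rfl
      have hkt : k ∉ t := fun h => (mem_erase.mp (mem_of_mem_erase (hsub h))).1 rfl
      simp only [mem_coe, mem_filter, mem_univ, true_and]
      refine ⟨?_, mem_insert_self _ _, ?_⟩
      · rw [card_insert_of_notMem hjt, hcard]; omega
      · rw [mem_insert]; rintro (h | h); exact hjk h.symm; exact hkt h
    · intro s hs
      simp only [mem_coe, mem_filter] at hs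
      exact insert_erase hs.2.1
    · intro t ht
      rw [mem_coe, mem_powersetCard] at ht
      have hjt : j ∉ t := fun h => (mem_erase.mp (ht.1 h)).1 rfl
      exact erase_insert hjt
  rw [hcard, card_powersetCard, card_erase_of_mem, card_erase_of_mem (mem_univ k), card_univ,
    Fintype.card_fin]
  · congr 1
  · exact mem_erase.mpr ⟨hjk, mem_univ j⟩

lemma expectPair {J : ℕ} (m : ℕ) (hm : 1 ≤ m) (h : Fin J → Fin J → ℝ) :
    ∑ s ∈ (univ : Finset (Finset (Fin J))).filter (fun s => s.card = m),
      ∑ j ∈ s, ∑ k ∈ sᶜ, h j k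
    = ((J - 2).choose (m - 1) : ℝ) * ∑ j, ∑ k ∈ univ.erase j, h j k := by
  have key : ∀ s : Finset (Fin J), ∑ j ∈ s, ∑ k ∈ sᶜ, h j k
      = ∑ j : Fin J, ∑ k : Fin J, if j ∈ s ∧ k ∉ s then h j k else 0 := by
    intro s
    have e1 : ∀ j : Fin J, (∑ k : Fin J, if j ∈ s ∧ k ∉ s then h j k else 0)
        = if j ∈ s then ∑ k ∈ sᶜ, h j k else 0 := by
      intro j
      by_cases hj : j ∈ s
      · simp only [hj, true_and, if_true]
        have ec : ∀ k : Fin J, (if k ∉ s then h j k else 0) = if k ∈ sᶜ then h j k else 0 := by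
          intro k; simp [mem_compl]
        rw [Finset.sum_congr rfl (fun k _ => ec k), Finset.sum_ite_mem, univ_inter]
      · simp [hj]
    rw [Finset.sum_congr rfl (fun j _ => e1 j), Finset.sum_ite_mem, univ_inter]
  simp only [key]
  rw [Finset.sum_comm]
  have inner : ∀ j : Fin J,
      (∑ s ∈ (univ : Finset (Finset (Fin J))).filter (fun s => s.card = m),
        ∑ k : Fin J, if j ∈ s ∧ k ∉ s then h j k else 0)
      = ((J - 2).choose (m - 1) : ℝ) * ∑ k ∈ univ.erase j, h j k := by
    intro j
    rw [Finset.sum_comm]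
    have e2 : ∀ k : Fin J,
        (∑ s ∈ (univ : Finset (Finset (Fin J))).filter (fun s => s.card = m),
          if j ∈ s ∧ k ∉ s then h j k else 0)
        = ((((univ : Finset (Finset (Fin J))).filter (fun s => s.card = m)).filter
            (fun s => j ∈ s ∧ k ∉ s)).card : ℝ) * h j k := by
      intro k
      rw [← Finset.sum_filter, Finset.sum_const, nsmul_eq_mul]
    rw [Finset.sum_congr rfl (fun k _ => e2 k)]
    rw [← Finset.sum_erase_add _ _ (mem_univ j)]
    have hzero : (((univ : Finset (Finset (Fin J))).filter (fun s => s.card = m)).filter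
        (fun s => j ∈ s ∧ j ∉ s)) = ∅ :=
      Finset.filter_false_of_mem (fun s _ => fun hc => hc.2 hc.1)
    rw [hzero]
    simp only [Finset.card_empty, Nat.cast_zero, zero_mul, add_zero]
    rw [Finset.mul_sum]
    exact Finset.sum_congr rfl (fun k hk => by
      rw [countJS m hm (fun hjk => (Finset.mem_erase.mp hk).1 hjk.symm)])
  rw [Finset.sum_congr rfl (fun j _ => inner j), ← Finset.mul_sum]

lemma algId {J : ℕ} (f g nn : Fin J → ℝ) :
    ∑ j, ∑ k ∈ univ.erase j, (nn k * f j - nn j * g k)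
    = ∑ j, (f j - g j) * ((∑ l, nn l) - nn j) := by
  have e1 : ∀ j : Fin J, ∑ k ∈ univ.erase j, (nn k * f j - nn j * g k)
      = ((∑ l, nn l) - nn j) * f j - nn j * ((∑ l, g l) - g j) := by
    intro j
    rw [Finset.sum_sub_distrib, ← Finset.sum_mul, ← Finset.mul_sum,
      Finset.sum_erase_eq_sub (mem_univ j), Finset.sum_erase_eq_sub (mem_univ j)]
  rw [Finset.sum_congr rfl (fun j _ => e1 j)]
  simp only [sub_mul, mul_sub, Finset.sum_sub_distrib, ← Finset.sum_mul, ← Finset.mul_sum,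
    mul_comm]
  ring

lemma prodDiff {J : ℕ} (s : Finset (Fin J)) (nn f g : Fin J → ℝ) :
    (∑ k ∈ sᶜ, nn k) * (∑ j ∈ s, f j) - (∑ j ∈ s, nn j) * (∑ k ∈ sᶜ, g k)
    = ∑ j ∈ s, ∑ k ∈ sᶜ, (nn k * f j - nn j * g k) := by
  rw [Finset.sum_mul_sum, Finset.sum_mul_sum, Finset.sum_comm (s := sᶜ) (t := s),
    ← Finset.sum_sub_distrib]
  exact Finset.sum_congr rfl (fun j _ => by rw [← Finset.sum_sub_distrib])

lemma chooseId {J m : ℕ} (hm : 1 ≤ m) (hmJ : m < J) :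
    m * ((J - m) * J.choose m) = J * ((J - 1) * (J - 2).choose (m - 1)) := by
  obtain ⟨q, rfl⟩ : ∃ q, J = m + q + 1 := ⟨J - m - 1, by omega⟩
  obtain ⟨p, rfl⟩ : ∃ p, m = p + 1 := ⟨m - 1, by omega⟩
  have eJ : p + 1 + q + 1 = p + q + 2 := by omega
  rw [eJ, show p + q + 2 - (p + 1) = q + 1 by omega, show p + q + 2 - 1 = p + q + 1 by omega,
    show p + q + 2 - 2 = p + q by omega, show p + 1 - 1 = p by omega]
  have h1 := Nat.add_one_mul_choose_eq (p + q + 1) p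
  have h2 := Nat.add_one_mul_choose_eq (p + q) p
  have h3 := Nat.choose_succ_right_eq (p + q + 1) p
  rw [show p + q + 1 - p = q + 1 by omega] at h3
  calc (p + 1) * ((q + 1) * (p + q + 2).choose (p + 1))
      = (q + 1) * ((p + q + 2).choose (p + 1) * (p + 1)) := by ring
    _ = (q + 1) * ((p + q + 1 + 1) * (p + q + 1).choose p) := by
        rw [← h1]
    _ = (p + q + 2) * ((p + q + 1).choose p * (q + 1)) := by ring_nf
    _ = (p + q + 2) * ((p + q + 1).choose (p + 1) * (p + 1)) := by rw [h3]
    _ = (p + q + 2) * ((p + q + 1) * (p + q).choose p) := by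
        rw [h2]

lemma coeffEq {J m : ℕ} (hJ2 : 2 ≤ J) (hm : 1 ≤ m) (hmJ : m < J) :
    ((J - 2).choose (m - 1) : ℝ) / (J.choose m : ℝ)
    = (m : ℝ) * ((J : ℝ) - m) / ((J : ℝ) * ((J : ℝ) - 1)) := by
  have hc : (0 : ℝ) < (J.choose m : ℝ) := by
    exact_mod_cast Nat.choose_pos hmJ.le
  have hJ0 : (0 : ℝ) < (J : ℝ) * ((J : ℝ) - 1) := by
    have : (2 : ℝ) ≤ (J : ℝ) := by exact_mod_cast hJ2
    nlinarith
  rw [div_eq_div_iff hc.ne' hJ0.ne']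
  have key : ((m * ((J - m) * J.choose m) : ℕ) : ℝ)
      = ((J * ((J - 1) * (J - 2).choose (m - 1)) : ℕ) : ℝ) := by
    exact_mod_cast congrArg Nat.cast (chooseId hm hmJ)
  push_cast [Nat.cast_sub hmJ.le, Nat.cast_sub (by omega : 1 ≤ J)] at key
  linarith [key]

lemma expectTSLS {J m : ℕ} (hJ2 : 2 ≤ J) (hm0 : 0 < m) (hmJ : m < J) (nn f g : Fin J → ℝ) :
    clExpect J m (fun s => (∑ j ∈ sᶜ, nn j) * (∑ j ∈ s, f j)
      - (∑ j ∈ s, nn j) * (∑ j ∈ sᶜ, g j))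
    = ((m : ℝ) * ((J : ℝ) - m) / ((J : ℝ) * ((J : ℝ) - 1))) *
        ∑ j, (f j - g j) * ((∑ l, nn l) - nn j) := by
  unfold clExpect
  simp only [prodDiff]
  rw [expectPair m hm0, algId, mul_div_right_comm, coeffEq hJ2 hm0 hmJ]

/-- Under cluster randomization (J ≥ 2), monotonicity, the exclusion restriction, and at
least one complier per cluster, TSLS identifies `Σ_j w_TSLS,j τ_j`, where
`w_TSLS,j = n_CO,j(n − n_j)/Σ_l n_CO,l(n − n_l)`; the denominator expectation equals
`(m(J−m)/(J(J−1))) Σ_j n_CO,j (n − n_j) > 0`. -/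
theorem stmt1
    (J m : ℕ) (hJ2 : 2 ≤ J) (hm0 : 0 < m) (hmJ : m < J)
    (n : Fin J → ℕ) (hn : ∀ j, 1 ≤ n j)
    -- potential compliances and potential outcomes (exclusion restriction:
    -- outcomes depend only on the treatment received)
    (D1 D0 : (j : Fin J) → Fin (n j) → Bool)
    (Y : (j : Fin J) → Fin (n j) → Bool → ℝ)
    -- monotonicity: no defiers
    (mono : ∀ j i, D0 j i = true → D1 j i = true)
    -- number of compliers per cluster, at least one in each cluster
    (nCO : Fin J → ℕ)
    (hnCO : ∀ j, nCO j =
      (univ.filter (fun i => D1 j i = true ∧ D0 j i = false)).card)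
    (hnCO1 : ∀ j, 1 ≤ nCO j)
    -- cluster-level CACEs
    (τ : Fin J → ℝ)
    (hτ : ∀ j, τ j =
      (∑ i ∈ univ.filter (fun i => D1 j i = true ∧ D0 j i = false),
        (Y j i true - Y j i false)) / nCO j)
    -- observed cluster totals under assignment s
    (Yt Dt : Finset (Fin J) → Fin J → ℝ)
    (hYt : ∀ s j, Yt s j = ∑ i, Y j i (if j ∈ s then D1 j i else D0 j i))
    (hDt : ∀ s j, Dt s j =
      ∑ i, (if (if j ∈ s then D1 j i else D0 j i) then (1 : ℝ) else 0))
    -- total number of units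
    (N : ℕ) (hN : N = ∑ j, n j)
    -- TSLS numerator and denominator
    (num den : Finset (Fin J) → ℝ)
    (hnum : ∀ s, num s = (∑ j ∈ sᶜ, (n j : ℝ)) * (∑ j ∈ s, Yt s j)
                      - (∑ j ∈ s, (n j : ℝ)) * (∑ j ∈ sᶜ, Yt s j))
    (hden : ∀ s, den s = (∑ j ∈ sᶜ, (n j : ℝ)) * (∑ j ∈ s, Dt s j)
                      - (∑ j ∈ s, (n j : ℝ)) * (∑ j ∈ sᶜ, Dt s j)) :
    clExpect J m den =
      ((m : ℝ) * ((J : ℝ) - m) / ((J : ℝ) * ((J : ℝ) - 1))) *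
        ∑ j, (nCO j : ℝ) * ((N : ℝ) - n j) ∧
    0 < clExpect J m den ∧
    clExpect J m num / clExpect J m den =
      ∑ j, ((nCO j : ℝ) * ((N : ℝ) - n j) / (∑ l, (nCO l : ℝ) * ((N : ℝ) - n l))) * τ j := by
  classical
  set a : Fin J → ℝ := fun j => ∑ i, Y j i (D1 j i) with ha_def
  set b : Fin J → ℝ := fun j => ∑ i, Y j i (D0 j i) with hb_def
  set d1 : Fin J → ℝ := fun j => ∑ i, (if D1 j i then (1 : ℝ) else 0) with hd1_def
  set d0 : Fin J → ℝ := fun j => ∑ i, (if D0 j i then (1 : ℝ) else 0) with hd0_def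
  have hnum' : num = fun s => (∑ j ∈ sᶜ, (n j : ℝ)) * (∑ j ∈ s, a j)
      - (∑ j ∈ s, (n j : ℝ)) * (∑ j ∈ sᶜ, b j) := by
    funext s
    rw [hnum s]
    congr 1
    · congr 1
      exact Finset.sum_congr rfl (fun j hj => by
        rw [hYt s j]
        exact Finset.sum_congr rfl (fun i _ => by rw [if_pos hj]))
    · congr 1
      exact Finset.sum_congr rfl (fun j hj => by
        rw [hYt s j]
        exact Finset.sum_congr rfl (fun i _ => by rw [if_neg (Finset.mem_compl.mp hj)]))
  have hden' : den = fun s => (∑ j ∈ sᶜ, (n j : ℝ)) * (∑ j ∈ s, d1 j)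
      - (∑ j ∈ s, (n j : ℝ)) * (∑ j ∈ sᶜ, d0 j) := by
    funext s
    rw [hden s]
    congr 1
    · congr 1
      exact Finset.sum_congr rfl (fun j hj => by
        rw [hDt s j]
        exact Finset.sum_congr rfl (fun i _ => by rw [if_pos hj]))
    · congr 1
      exact Finset.sum_congr rfl (fun j hj => by
        rw [hDt s j]
        exact Finset.sum_congr rfl (fun i _ => by rw [if_neg (Finset.mem_compl.mp hj)]))
  have hdiff : ∀ j, d1 j - d0 j = (nCO j : ℝ) := by
    intro j
    rw [hd1_def, hd0_def, ← Finset.sum_sub_distrib, hnCO j, ← Finset.sum_boole]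
    refine Finset.sum_congr rfl (fun i _ => ?_)
    cases h1 : D1 j i <;> cases h0 : D0 j i
    · simp [h1, h0]
    · exact absurd (mono j i h0) (by simp [h1])
    · simp [h1, h0]
    · simp [h1, h0]
  have habdiff : ∀ j, a j - b j = (nCO j : ℝ) * τ j := by
    intro j
    have hnCOj : ((nCO j : ℝ)) ≠ 0 := by
      have := hnCO1 j; positivity
    rw [hτ j, mul_comm, div_mul_cancel₀ _ hnCOj, ha_def, hb_def, ← Finset.sum_sub_distrib,
      ← Finset.sum_filter_add_sum_filter_not univ
        (fun i => D1 j i = true ∧ D0 j i = false)]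
    have hz : ∑ i ∈ univ.filter (fun i => ¬(D1 j i = true ∧ D0 j i = false)),
        (Y j i (D1 j i) - Y j i (D0 j i)) = 0 := by
      apply Finset.sum_eq_zero
      intro i hi
      rw [mem_filter] at hi
      have heq : D1 j i = D0 j i := by
        cases h1 : D1 j i <;> cases h0 : D0 j i
        · rfl
        · exact absurd (mono j i h0) (by simp [h1])
        · exact (hi.2 ⟨h1, h0⟩).elim
        · rfl
      rw [heq, sub_self]
    rw [hz, add_zero]
    exact Finset.sum_congr rfl (fun i hi => by
      rw [(mem_filter.mp hi).2.1, (mem_filter.mp hi).2.2])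
  have hNn : ((N : ℝ)) = ∑ l, ((n l : ℝ)) := by rw [hN]; push_cast; rfl
  have hDen : clExpect J m den =
      ((m : ℝ) * ((J : ℝ) - m) / ((J : ℝ) * ((J : ℝ) - 1))) *
        ∑ j, (nCO j : ℝ) * ((N : ℝ) - n j) := by
    rw [hden', expectTSLS hJ2 hm0 hmJ (fun j => (n j : ℝ)) d1 d0]
    congr 1
    refine Finset.sum_congr rfl (fun j _ => ?_)
    rw [hdiff j, ← hNn]
  have hNum : clExpect J m num =
      ((m : ℝ) * ((J : ℝ) - m) / ((J : ℝ) * ((J : ℝ) - 1))) *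
        ∑ j, ((nCO j : ℝ) * τ j) * ((N : ℝ) - n j) := by
    rw [hnum', expectTSLS hJ2 hm0 hmJ (fun j => (n j : ℝ)) a b]
    congr 1
    refine Finset.sum_congr rfl (fun j _ => ?_)
    rw [habdiff j, ← hNn]
  have hcoeff : 0 < (m : ℝ) * ((J : ℝ) - m) / ((J : ℝ) * ((J : ℝ) - 1)) := by
    have h1 : (0 : ℝ) < m := by exact_mod_cast hm0
    have h2 : (m : ℝ) < J := by exact_mod_cast hmJ
    have h3 : (2 : ℝ) ≤ J := by exact_mod_cast hJ2
    apply div_pos (by nlinarith) (by nlinarith)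
  have hterm : ∀ j, (0 : ℝ) < (nCO j : ℝ) * ((N : ℝ) - n j) := by
    intro j
    have h1 : (1 : ℝ) ≤ (nCO j : ℝ) := by exact_mod_cast hnCO1 j
    have h2 : n j + 1 ≤ N := by
      rw [hN, ← Finset.sum_erase_add univ n (mem_univ j)]
      have hne : (univ.erase j).Nonempty := by
        rw [← Finset.card_pos, card_erase_of_mem (mem_univ j), card_univ, Fintype.card_fin]
        omega
      obtain ⟨k, hk⟩ := hne
      have h3 : n k ≤ ∑ l ∈ univ.erase j, n l :=
        Finset.single_le_sum (fun l _ => Nat.zero_le _) hk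
      have := hn k
      omega
    have h2' : (n j : ℝ) + 1 ≤ (N : ℝ) := by exact_mod_cast h2
    nlinarith
  have huniv : (univ : Finset (Fin J)).Nonempty := by
    rw [← Finset.card_pos, card_univ, Fintype.card_fin]; omega
  have hW : 0 < ∑ j, (nCO j : ℝ) * ((N : ℝ) - n j) :=
    Finset.sum_pos (fun j _ => hterm j) huniv
  refine ⟨hDen, ?_, ?_⟩
  · rw [hDen]; exact mul_pos hcoeff hW
  · rw [hNum, hDen, mul_div_mul_left _ _ hcoeff.ne']
    simp only [div_mul_eq_mul_div]
    rw [← Finset.sum_div]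
    congr 1
    exact Finset.sum_congr rfl (fun j _ => by ring)
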